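/- A point x_M corresponding to a representation M is χ_{(Θ,σ)}-semistable if and only if for every filtration 0 ⊂ M₁ ⊂ ... ⊂ M_{t+1} = M by subrepresentations and every choice of weights Γ₁ < ... < Γ_{t+1}, one has Σ_{i=1}^{t+1} Γ_i[Θ(M)σ(M^i) − σ(M)Θ(M^i)] ≤ 0. Moreover, this filtration criterion is equivalent to the slope criterion: for every nonzero proper subrepresentation M' ⊂ M, Θ(M')/σ(M') ≤ Θ(M)/σ(M). -/

import Mathlib

open Finset

/-- A subrepresentation of a fixed representation `M` of a quiver with vertex set `V`,
arrow set `E`, source/target maps `src tgt : E → V` and structure maps `f`. -/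
structure Subrep {k V E : Type} [Field k] (M : V → Type) [∀ v, AddCommGroup (M v)]
    [∀ v, Module k (M v)] (src tgt : E → V) (f : ∀ e, M (src e) →ₗ[k] M (tgt e)) : Type where
  N : ∀ v, Submodule k (M v)
  compat : ∀ e, (N (src e)).map (f e) ≤ N (tgt e)

namespace Subrep

variable {k V E : Type} [Field k] [Fintype V] {M : V → Type}
  [∀ v, AddCommGroup (M v)] [∀ v, Module k (M v)] [∀ v, FiniteDimensional k (M v)]
  {src tgt : E → V} {f : ∀ e, M (src e) →ₗ[k] M (tgt e)}

instance : PartialOrder (Subrep M src tgt f) :=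
  PartialOrder.lift Subrep.N (fun A B h => by cases A; cases B; simpa using h)

/-- The zero subrepresentation. -/
def bot : Subrep M src tgt f := ⟨fun _ => ⊥, fun e => by simp⟩

/-- The whole representation `M` as a subrepresentation of itself. -/
def top : Subrep M src tgt f := ⟨fun _ => ⊤, fun e => le_top⟩

/-- Sum of two subrepresentations. -/
def sup (A B : Subrep M src tgt f) : Subrep M src tgt f :=
  ⟨fun v => A.N v ⊔ B.N v, fun e => by
    rw [Submodule.map_sup]
    exact sup_le_sup (A.compat e) (B.compat e)⟩

/-- `tot c A = ∑_v c_v · dim A_v`; gives `Θ(A)` resp. `σ(A)` for `c = Θ` resp. `σ`. -/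
noncomputable def tot (c : V → ℤ) (A : Subrep M src tgt f) : ℤ :=
  ∑ v, c v * (Module.finrank k (A.N v) : ℤ)

/-- The slope `μ(A) = Θ(A)/σ(A)` as a rational number. -/
noncomputable def slope (Θ σ : V → ℤ) (A : Subrep M src tgt f) : ℚ :=
  (tot Θ A : ℚ) / (tot σ A : ℚ)

/-- The slope of the quotient `B/A` for `A ≤ B`. -/
noncomputable def quotSlope (Θ σ : V → ℤ) (A B : Subrep M src tgt f) : ℚ :=
  ((tot Θ B - tot Θ A : ℤ) : ℚ) / ((tot σ B - tot σ A : ℤ) : ℚ)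

/-- `(Θ,σ)`-semistability of the subrepresentation `A`, viewed as a representation itself:
every nonzero proper subrepresentation of `A` has slope at most `μ(A)`. -/
def Semistable (Θ σ : V → ℤ) (A : Subrep M src tgt f) : Prop :=
  ∀ B : Subrep M src tgt f, B ≤ A → B ≠ bot → B ≠ A → slope Θ σ B ≤ slope Θ σ A

/-- `(Θ,σ)`-semistability of the quotient representation `B/A`, expressed via the
correspondence between subrepresentations of `B/A` and subrepresentations `P` with
`A ≤ P ≤ B`. -/
def QuotSemistable (Θ σ : V → ℤ) (A B : Subrep M src tgt f) : Prop :=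
  ∀ P : Subrep M src tgt f, A ≤ P → P ≤ B → P ≠ A → quotSlope Θ σ A P ≤ quotSlope Θ σ A B

/-- `F` (indexed by `ℕ`, constant equal to `⊤` from `n+1` on) is a Harder–Narasimhan
filtration `0 = F 0 ⊂ F 1 ⊂ ⋯ ⊂ F (n+1) = M` : successive quotients have strictly
decreasing slopes and are `(Θ,σ)`-semistable. -/
def IsHNFiltration (Θ σ : V → ℤ) (n : ℕ) (F : ℕ → Subrep M src tgt f) : Prop :=
  F 0 = bot ∧ (∀ i, n + 1 ≤ i → F i = top) ∧
  (∀ i ≤ n, F i < F (i+1)) ∧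
  (∀ i, i + 1 ≤ n → quotSlope Θ σ (F (i+1)) (F (i+2)) < quotSlope Θ σ (F i) (F (i+1))) ∧
  (∀ i ≤ n, QuotSemistable Θ σ (F i) (F (i+1)))

end Subrep

section Aux

/-- Abel summation (summation by parts) in the form we need. -/
lemma hm_abel (Γ h : ℕ → ℚ) (n : ℕ) :
    ∑ i ∈ Finset.range (n + 1), Γ i * (h (i + 1) - h i)
      = Γ n * h (n + 1) - Γ 0 * h 0
        - ∑ i ∈ Finset.range n, (Γ (i + 1) - Γ i) * h (i + 1) := by
  induction n with
  | zero => simp only [Finset.sum_range_one, zero_add]; ring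
  | succ n ih =>
    rw [Finset.sum_range_succ, ih, Finset.sum_range_succ]
    ring

lemma hm_mono {α : Type*} [Preorder α] (F : ℕ → α) (n : ℕ)
    (hF : ∀ i ≤ n, F i < F (i + 1)) :
    ∀ j, j ≤ n + 1 → ∀ i, i ≤ j → F i ≤ F j := by
  intro j
  induction j with
  | zero => intro _ i hi; obtain rfl : i = 0 := Nat.le_zero.mp hi; exact le_refl _
  | succ j ih =>
    intro hj i hi
    rcases Nat.eq_or_lt_of_le hi with rfl | hlt
    · exact le_refl _
    · exact le_trans (ih (by omega) i (by omega)) (hF j (by omega)).le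

namespace Subrep

variable {k V E : Type} [Field k] [Fintype V] {M : V → Type}
  [∀ v, AddCommGroup (M v)] [∀ v, Module k (M v)] [∀ v, FiniteDimensional k (M v)]
  {src tgt : E → V} {f : ∀ e, M (src e) →ₗ[k] M (tgt e)}

lemma bot_le' (A : Subrep M src tgt f) : (bot : Subrep M src tgt f) ≤ A := by
  intro v; exact bot_le

lemma le_top' (A : Subrep M src tgt f) : A ≤ (top : Subrep M src tgt f) := by
  intro v; exact le_top

lemma tot_bot (c : V → ℤ) : tot c (bot : Subrep M src tgt f) = 0 := by
  simp only [tot]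
  exact Finset.sum_eq_zero fun v _ => by
    have h : (bot : Subrep M src tgt f).N v = ⊥ := rfl
    rw [h, finrank_bot]; simp

lemma tot_pos {σ : V → ℤ} (hσ : ∀ v, 0 < σ v) {A : Subrep M src tgt f}
    (hA : A ≠ bot) : 0 < tot σ A := by
  have hv : ∃ v, A.N v ≠ ⊥ := by
    by_contra hc
    push_neg at hc
    exact hA (le_antisymm (fun v => (hc v).le) (bot_le' A))
  obtain ⟨v, hv⟩ := hv
  have : Nontrivial (A.N v) := Submodule.nontrivial_iff_ne_bot.mpr hv
  have hpos : 0 < Module.finrank k (A.N v) := Module.finrank_pos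
  refine Finset.sum_pos' (fun w _ => ?_) ⟨v, Finset.mem_univ v, ?_⟩
  · exact mul_nonneg (hσ w).le (by positivity)
  · exact mul_pos (hσ v) (by exact_mod_cast hpos)

end Subrep

end Aux

open Subrep in
/-- Hilbert–Mumford criterion for quiver representations: the filtration criterion
(for every filtration `0 = F 0 ⊂ ⋯ ⊂ F (n+1) = M` by subrepresentations and increasing
weights `Γ`, `∑_i Γ_i[Θ(M)σ(M^i) − σ(M)Θ(M^i)] ≤ 0`) is equivalent to the slope
criterion (`Θ(A)/σ(A) ≤ Θ(M)/σ(M)` for every nonzero proper subrepresentation `A`). -/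
theorem hilbert_mumford_criterion {k V E : Type} [Field k] [Fintype V] {M : V → Type}
    [∀ v, AddCommGroup (M v)] [∀ v, Module k (M v)] [∀ v, FiniteDimensional k (M v)]
    {src tgt : E → V} {f : ∀ e, M (src e) →ₗ[k] M (tgt e)}
    (Θ σ : V → ℤ) (hσ : ∀ v, 0 < σ v) :
    ((∀ (n : ℕ) (F : ℕ → Subrep M src tgt f) (Γ : ℕ → ℚ),
        F 0 = bot → F (n + 1) = top →
        (∀ i ≤ n, F i < F (i + 1)) → (∀ i ≤ n, Γ i < Γ (i + 1)) →
        ∑ i ∈ Finset.range (n + 1), Γ i *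
          ((tot Θ (top : Subrep M src tgt f) : ℚ) * ((tot σ (F (i+1)) : ℚ) - (tot σ (F i) : ℚ))
            - (tot σ (top : Subrep M src tgt f) : ℚ) *
              ((tot Θ (F (i+1)) : ℚ) - (tot Θ (F i) : ℚ))) ≤ 0) ↔
      (∀ A : Subrep M src tgt f, A ≠ bot → A ≠ top →
        slope Θ σ A ≤ slope Θ σ (top : Subrep M src tgt f))) := by
  constructor
  · -- filtration criterion ⇒ slope criterion
    intro hfil A hAbot hAtop
    have htb : (top : Subrep M src tgt f) ≠ bot := by
      intro h
      exact hAbot (le_antisymm (h ▸ le_top' A) (bot_le' A))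
    have hσA : (0 : ℚ) < (tot σ A : ℚ) := by exact_mod_cast tot_pos hσ hAbot
    have hσT : (0 : ℚ) < (tot σ (top : Subrep M src tgt f) : ℚ) := by
      exact_mod_cast tot_pos hσ htb
    set F : ℕ → Subrep M src tgt f :=
      fun i => if i = 0 then bot else if i = 1 then A else top with hFdef
    have key := hfil 1 F (fun i => (i : ℚ)) (by simp [hFdef]) (by simp [hFdef])
      (by
        intro i hi
        interval_cases i
        · simpa [hFdef] using lt_of_le_of_ne (bot_le' A) (Ne.symm hAbot)
        · simpa [hFdef] using lt_of_le_of_ne (le_top' A) hAtop)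
      (by intro i _; push_cast; linarith)
    rw [Finset.sum_range_succ, Finset.sum_range_one] at key
    simp only [hFdef] at key
    norm_num at key
    rw [Subrep.slope, Subrep.slope, div_le_div_iff₀ hσA hσT]
    nlinarith [key]
  · -- slope criterion ⇒ filtration criterion
    intro hb n F Γ hF0 hFtop hlt hΓ
    set g : Subrep M src tgt f → ℚ := fun A =>
      (tot Θ (top : Subrep M src tgt f) : ℚ) * (tot σ A : ℚ)
        - (tot σ (top : Subrep M src tgt f) : ℚ) * (tot Θ A : ℚ) with hg
    have hrw : ∑ i ∈ Finset.range (n + 1), Γ i *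
          ((tot Θ (top : Subrep M src tgt f) : ℚ) * ((tot σ (F (i+1)) : ℚ) - (tot σ (F i) : ℚ))
            - (tot σ (top : Subrep M src tgt f) : ℚ) *
              ((tot Θ (F (i+1)) : ℚ) - (tot Θ (F i) : ℚ)))
        = ∑ i ∈ Finset.range (n + 1), Γ i * (g (F (i+1)) - g (F i)) := by
      refine Finset.sum_congr rfl fun i _ => ?_
      simp only [hg]; ring
    rw [hrw, hm_abel Γ (fun i => g (F i)) n]
    have h1 : g (F (n+1)) = 0 := by rw [hFtop]; simp only [hg]; ring
    have h2 : g (F 0) = 0 := by rw [hF0]; simp [hg, tot_bot]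
    have h3 : 0 ≤ ∑ i ∈ Finset.range n, (Γ (i+1) - Γ i) * g (F (i+1)) := by
      refine Finset.sum_nonneg fun i hi => ?_
      have hi' := Finset.mem_range.mp hi
      refine mul_nonneg (by linarith [hΓ i (by omega)]) ?_
      have hbotlt : (bot : Subrep M src tgt f) < F (i+1) := by
        calc (bot : Subrep M src tgt f) = F 0 := hF0.symm
          _ < F 1 := hlt 0 (by omega)
          _ ≤ F (i+1) := hm_mono F n hlt (i+1) (by omega) 1 (by omega)
      have hlttop : F (i+1) < top := by
        calc F (i+1) ≤ F n := hm_mono F n hlt n (by omega) (i+1) (by omega)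
          _ < F (n+1) := hlt n le_rfl
          _ = top := hFtop
      have hσA : (0 : ℚ) < (tot σ (F (i+1)) : ℚ) := by
        exact_mod_cast tot_pos hσ hbotlt.ne'
      have hσT : (0 : ℚ) < (tot σ (top : Subrep M src tgt f) : ℚ) := by
        exact_mod_cast tot_pos hσ (hbotlt.trans hlttop).ne'
      have hs := hb (F (i+1)) hbotlt.ne' hlttop.ne
      rw [Subrep.slope, Subrep.slope, div_le_div_iff₀ hσA hσT] at hs
      simp only [hg]
      linarith
    rw [h1, h2]
    linarith
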